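/- arXiv:1305.4447 — 3 statements merged into one kernel-verified Lean document; each statement's English description precedes it below -/
import Mathlib

section
/- The quasi-shuffle (stuffle) product on k⟨Y⟩ is associative. -/
open scoped TensorProduct
open Finset

noncomputable section

/-- The alphabet `Y = {y_n : n ≥ 1}` and words over it. -/
abbrev Word : Type := FreeMonoid ℕ+

/-- `k⟨Y⟩`, the span of the words over `Y`, with the concatenation product. -/
abbrev QSh (k : Type) [CommRing k] : Type := MonoidAlgebra k Word

/-- The letter `y_n` viewed in `k⟨Y⟩`, with the convention `y_0 = 1`. -/
def yy (k : Type) [CommRing k] (n : ℕ) : QSh k :=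
  if h : 0 < n then MonoidAlgebra.of k Word (FreeMonoid.of (⟨n, h⟩ : ℕ+)) else 1

/-- The quasi-shuffle (stuffle) product of two words, with values in `k⟨Y⟩`:
`1 ⊛ v = v`, `u ⊛ 1 = u`, and
`(y_a u) ⊛ (y_b v) = y_a (u ⊛ y_b v) + y_b (y_a u ⊛ v) + y_{a+b} (u ⊛ v)`. -/
def stuffleAux (k : Type) [CommRing k] : List ℕ+ → List ℕ+ → QSh k
  | [], v => MonoidAlgebra.of k Word (FreeMonoid.ofList v)
  | a :: u, [] => MonoidAlgebra.of k Word (FreeMonoid.ofList (a :: u))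
  | a :: u, b :: v =>
      MonoidAlgebra.of k Word (FreeMonoid.of a) * stuffleAux k u (b :: v)
    + MonoidAlgebra.of k Word (FreeMonoid.of b) * stuffleAux k (a :: u) v
    + MonoidAlgebra.of k Word (FreeMonoid.of (a + b)) * stuffleAux k u v
  termination_by u v => u.length + v.length
  decreasing_by all_goals (simp; try omega)

/-- The bilinear extension of the quasi-shuffle product of words to all of `k⟨Y⟩`. -/
def stuffleProd (k : Type) [CommRing k] [Algebra ℚ k] (P Q : QSh k) : QSh k :=
  P.coeff.sum fun u a => Q.coeff.sum fun v b =>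
    (a * b) • stuffleAux k (FreeMonoid.toList u) (FreeMonoid.toList v)

namespace Stuffle
variable (k : Type) [CommRing k] [Algebra ℚ k]
set_option linter.unusedSectionVars false

lemma qsh_induction {p : QSh k → Prop} (h0 : p 0)
    (ha : ∀ P Q : QSh k, p P → p Q → p (P + Q))
    (hs : ∀ (u : Word) (c : k), p (MonoidAlgebra.single u c)) (P : QSh k) : p P :=
  MonoidAlgebra.induction_linear P h0 (fun f g hf hg => ha f g hf hg) (fun u c => hs u c)

def ofL (l : List ℕ+) : QSh k := MonoidAlgebra.of k Word (FreeMonoid.ofList l)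

lemma ofL_eq_single (l : List ℕ+) :
    ofL k l = MonoidAlgebra.single (FreeMonoid.ofList l) (1:k) := rfl

lemma SP_zero_left (Q : QSh k) : stuffleProd k 0 Q = 0 := by
  simp [stuffleProd]

lemma SP_zero_right (P : QSh k) : stuffleProd k P 0 = 0 := by
  simp [stuffleProd]

lemma SP_add_left (P P' Q : QSh k) :
    stuffleProd k (P + P') Q = stuffleProd k P Q + stuffleProd k P' Q := by
  classical
  unfold stuffleProd
  rw [MonoidAlgebra.coeff_add, Finsupp.sum_add_index] <;> simp [add_mul, add_smul, Finsupp.sum_add]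

lemma SP_add_right (P Q Q' : QSh k) :
    stuffleProd k P (Q + Q') = stuffleProd k P Q + stuffleProd k P Q' := by
  classical
  unfold stuffleProd
  rw [← Finsupp.sum_add]
  congr 1; ext u a
  rw [MonoidAlgebra.coeff_add, Finsupp.sum_add_index] <;> simp [mul_add, add_smul]

lemma SP_single_single (u v : Word) (a b : k) :
    stuffleProd k (MonoidAlgebra.single u a) (MonoidAlgebra.single v b)
      = (a * b) • stuffleAux k (FreeMonoid.toList u) (FreeMonoid.toList v) := by
  unfold stuffleProd
  rw [MonoidAlgebra.coeff_single, MonoidAlgebra.coeff_single, Finsupp.sum_single_index, Finsupp.sum_single_index] <;> simp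

lemma stuffleAux_nil_left (v : List ℕ+) : stuffleAux k [] v = ofL k v := by
  rw [stuffleAux]; rfl

lemma stuffleAux_nil_right (a : ℕ+) (u : List ℕ+) :
    stuffleAux k (a::u) [] = ofL k (a::u) := by
  rw [stuffleAux]; rfl

lemma stuffleAux_cons_cons (a b : ℕ+) (u v : List ℕ+) :
    stuffleAux k (a::u) (b::v) =
      MonoidAlgebra.of k Word (FreeMonoid.of a) * stuffleAux k u (b :: v)
    + MonoidAlgebra.of k Word (FreeMonoid.of b) * stuffleAux k (a :: u) v
    + MonoidAlgebra.of k Word (FreeMonoid.of (a + b)) * stuffleAux k u v := by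
  rw [stuffleAux]

lemma SP_ofL_ofL (u v : List ℕ+) :
    stuffleProd k (ofL k u) (ofL k v) = stuffleAux k u v := by
  rw [ofL_eq_single, ofL_eq_single, SP_single_single]
  simp

lemma one_eq_ofL_nil : (1 : QSh k) = ofL k [] := rfl

lemma SP_one_left (Q : QSh k) : stuffleProd k 1 Q = Q := by
  induction Q using qsh_induction with
  | h0 => exact SP_zero_right k 1
  | ha P Q hP hQ => rw [SP_add_right, hP, hQ]
  | hs v b =>
    rw [one_eq_ofL_nil, ofL_eq_single, SP_single_single]
    simp only [FreeMonoid.toList_ofList]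
    rw [stuffleAux_nil_left]
    simp [ofL_eq_single, Finsupp.smul_single]

lemma SP_one_right (P : QSh k) : stuffleProd k P 1 = P := by
  induction P using qsh_induction with
  | h0 => exact SP_zero_left k 1
  | ha P Q hP hQ => rw [SP_add_left, hP, hQ]
  | hs v b =>
    rw [one_eq_ofL_nil, ofL_eq_single, SP_single_single]
    simp only [FreeMonoid.toList_ofList]
    cases hv : FreeMonoid.toList v with
    | nil =>
      rw [stuffleAux_nil_left]
      have : v = FreeMonoid.ofList [] := by
        rw [← hv]; exact (FreeMonoid.ofList_toList v).symm
      simp [this, ofL_eq_single, Finsupp.smul_single]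
    | cons a u =>
      rw [stuffleAux_nil_right]
      have : v = FreeMonoid.ofList (a :: u) := by
        rw [← hv]; exact (FreeMonoid.ofList_toList v).symm
      simp [this, ofL_eq_single, Finsupp.smul_single]

lemma of_mul_single (x : ℕ+) (u : Word) (c : k) :
    MonoidAlgebra.of k Word (FreeMonoid.of x) * MonoidAlgebra.single u c
      = MonoidAlgebra.single (FreeMonoid.of x * u) c := by
  rw [MonoidAlgebra.of_apply]
  exact (MonoidAlgebra.single_mul_single ..).trans (by rw [one_mul])

lemma SP_cons_left (x : ℕ+) (P : QSh k) (b : ℕ+) (w : List ℕ+) :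
    stuffleProd k (MonoidAlgebra.of k Word (FreeMonoid.of x) * P) (ofL k (b::w)) =
      MonoidAlgebra.of k Word (FreeMonoid.of x) * stuffleProd k P (ofL k (b::w))
    + MonoidAlgebra.of k Word (FreeMonoid.of b) *
        stuffleProd k (MonoidAlgebra.of k Word (FreeMonoid.of x) * P) (ofL k w)
    + MonoidAlgebra.of k Word (FreeMonoid.of (x + b)) * stuffleProd k P (ofL k w) := by
  induction P using qsh_induction with
  | h0 => simp [SP_zero_left]
  | ha f g hf hg =>
    simp only [mul_add, SP_add_left, hf, hg]
    abel
  | hs u c =>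
    rw [of_mul_single, ofL_eq_single, ofL_eq_single, SP_single_single, SP_single_single,
      SP_single_single, SP_single_single]
    have htl : FreeMonoid.toList (FreeMonoid.of x * u) = x :: FreeMonoid.toList u := rfl
    rw [htl]
    simp only [FreeMonoid.toList_ofList]
    rw [stuffleAux_cons_cons]
    simp [mul_smul_comm, smul_add]

lemma SP_cons_right (a : ℕ+) (u : List ℕ+) (x : ℕ+) (Q : QSh k) :
    stuffleProd k (ofL k (a::u)) (MonoidAlgebra.of k Word (FreeMonoid.of x) * Q) =
      MonoidAlgebra.of k Word (FreeMonoid.of a) *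
        stuffleProd k (ofL k u) (MonoidAlgebra.of k Word (FreeMonoid.of x) * Q)
    + MonoidAlgebra.of k Word (FreeMonoid.of x) * stuffleProd k (ofL k (a::u)) Q
    + MonoidAlgebra.of k Word (FreeMonoid.of (a + x)) * stuffleProd k (ofL k u) Q := by
  induction Q using qsh_induction with
  | h0 => simp [SP_zero_right]
  | ha f g hf hg =>
    simp only [mul_add, SP_add_right, hf, hg]
    abel
  | hs v c =>
    rw [of_mul_single, ofL_eq_single, ofL_eq_single, SP_single_single, SP_single_single,
      SP_single_single, SP_single_single]
    have htl : FreeMonoid.toList (FreeMonoid.of x * v) = x :: FreeMonoid.toList v := rfl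
    rw [htl]
    simp only [FreeMonoid.toList_ofList]
    rw [stuffleAux_cons_cons]
    simp [mul_smul_comm, smul_add]

theorem aux_assoc : ∀ u v w : List ℕ+,
    stuffleProd k (stuffleAux k u v) (ofL k w) = stuffleProd k (ofL k u) (stuffleAux k v w)
  | [], v, w => by
      rw [stuffleAux_nil_left, SP_ofL_ofL, ← one_eq_ofL_nil, SP_one_left]
  | a :: u, [], w => by
      rw [stuffleAux_nil_right, stuffleAux_nil_left]
  | a :: u, b :: v, [] => by
      rw [stuffleAux_nil_right, ← one_eq_ofL_nil, SP_one_right, SP_ofL_ofL]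
  | a :: u, b :: v, c :: w => by
      calc stuffleProd k (stuffleAux k (a::u) (b::v)) (ofL k (c::w))
          = stuffleProd k (MonoidAlgebra.of k Word (FreeMonoid.of a) * stuffleAux k u (b::v)) (ofL k (c::w))
          + stuffleProd k (MonoidAlgebra.of k Word (FreeMonoid.of b) * stuffleAux k (a::u) v) (ofL k (c::w))
          + stuffleProd k (MonoidAlgebra.of k Word (FreeMonoid.of (a+b)) * stuffleAux k u v) (ofL k (c::w)) := by
            rw [stuffleAux_cons_cons, SP_add_left, SP_add_left]
        _ = (MonoidAlgebra.of k Word (FreeMonoid.of a) * stuffleProd k (stuffleAux k u (b::v)) (ofL k (c::w))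
            + MonoidAlgebra.of k Word (FreeMonoid.of c) * stuffleProd k (MonoidAlgebra.of k Word (FreeMonoid.of a) * stuffleAux k u (b::v)) (ofL k w)
            + MonoidAlgebra.of k Word (FreeMonoid.of (a+c)) * stuffleProd k (stuffleAux k u (b::v)) (ofL k w))
          + (MonoidAlgebra.of k Word (FreeMonoid.of b) * stuffleProd k (stuffleAux k (a::u) v) (ofL k (c::w))
            + MonoidAlgebra.of k Word (FreeMonoid.of c) * stuffleProd k (MonoidAlgebra.of k Word (FreeMonoid.of b) * stuffleAux k (a::u) v) (ofL k w)
            + MonoidAlgebra.of k Word (FreeMonoid.of (b+c)) * stuffleProd k (stuffleAux k (a::u) v) (ofL k w))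
          + (MonoidAlgebra.of k Word (FreeMonoid.of (a+b)) * stuffleProd k (stuffleAux k u v) (ofL k (c::w))
            + MonoidAlgebra.of k Word (FreeMonoid.of c) * stuffleProd k (MonoidAlgebra.of k Word (FreeMonoid.of (a+b)) * stuffleAux k u v) (ofL k w)
            + MonoidAlgebra.of k Word (FreeMonoid.of (a+b+c)) * stuffleProd k (stuffleAux k u v) (ofL k w)) := by
            rw [SP_cons_left, SP_cons_left, SP_cons_left]
        _ = MonoidAlgebra.of k Word (FreeMonoid.of a) * stuffleProd k (stuffleAux k u (b::v)) (ofL k (c::w))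
          + MonoidAlgebra.of k Word (FreeMonoid.of b) * stuffleProd k (stuffleAux k (a::u) v) (ofL k (c::w))
          + MonoidAlgebra.of k Word (FreeMonoid.of (a+b)) * stuffleProd k (stuffleAux k u v) (ofL k (c::w))
          + MonoidAlgebra.of k Word (FreeMonoid.of c) * stuffleProd k (stuffleAux k (a::u) (b::v)) (ofL k w)
          + MonoidAlgebra.of k Word (FreeMonoid.of (a+c)) * stuffleProd k (stuffleAux k u (b::v)) (ofL k w)
          + MonoidAlgebra.of k Word (FreeMonoid.of (b+c)) * stuffleProd k (stuffleAux k (a::u) v) (ofL k w)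
          + MonoidAlgebra.of k Word (FreeMonoid.of (a+b+c)) * stuffleProd k (stuffleAux k u v) (ofL k w) := by
            rw [stuffleAux_cons_cons k a b u v, SP_add_left, SP_add_left, mul_add, mul_add]
            abel
        _ = MonoidAlgebra.of k Word (FreeMonoid.of a) * stuffleProd k (ofL k u) (stuffleAux k (b::v) (c::w))
          + MonoidAlgebra.of k Word (FreeMonoid.of b) * stuffleProd k (ofL k (a::u)) (stuffleAux k v (c::w))
          + MonoidAlgebra.of k Word (FreeMonoid.of (a+b)) * stuffleProd k (ofL k u) (stuffleAux k v (c::w))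
          + MonoidAlgebra.of k Word (FreeMonoid.of c) * stuffleProd k (ofL k (a::u)) (stuffleAux k (b::v) w)
          + MonoidAlgebra.of k Word (FreeMonoid.of (a+c)) * stuffleProd k (ofL k u) (stuffleAux k (b::v) w)
          + MonoidAlgebra.of k Word (FreeMonoid.of (b+c)) * stuffleProd k (ofL k (a::u)) (stuffleAux k v w)
          + MonoidAlgebra.of k Word (FreeMonoid.of (a+b+c)) * stuffleProd k (ofL k u) (stuffleAux k v w) := by
            rw [aux_assoc u (b::v) (c::w), aux_assoc (a::u) v (c::w), aux_assoc u v (c::w),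
              aux_assoc (a::u) (b::v) w, aux_assoc u (b::v) w, aux_assoc (a::u) v w,
              aux_assoc u v w]
        _ = stuffleProd k (ofL k (a::u)) (stuffleAux k (b::v) (c::w)) := by
            rw [stuffleAux_cons_cons k b c v w]
            simp only [SP_add_right, SP_cons_right, mul_add]
            rw [← add_assoc a b c]
            abel
  termination_by u v w => u.length + v.length + w.length
  decreasing_by all_goals (simp; try omega)

lemma SP_smul_left (r : k) (P Q : QSh k) :
    stuffleProd k (r • P) Q = r • stuffleProd k P Q := by
  induction P using qsh_induction with
  | h0 => simp [SP_zero_left]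
  | ha P P' hP hP' => rw [smul_add, SP_add_left, SP_add_left, hP, hP', smul_add]
  | hs u a =>
    induction Q using qsh_induction with
    | h0 => simp [SP_zero_right]
    | ha Q Q' hQ hQ' => rw [SP_add_right, SP_add_right, hQ, hQ', smul_add]
    | hs v b =>
      rw [show r • (MonoidAlgebra.single u a : QSh k) = MonoidAlgebra.single u (r*a) by
        rw [MonoidAlgebra.smul_single, smul_eq_mul]]
      rw [SP_single_single, SP_single_single, smul_smul, mul_assoc]

lemma SP_smul_right (r : k) (P Q : QSh k) :
    stuffleProd k P (r • Q) = r • stuffleProd k P Q := by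
  induction P using qsh_induction with
  | h0 => simp [SP_zero_left]
  | ha P P' hP hP' => rw [SP_add_left, SP_add_left, hP, hP', smul_add]
  | hs u a =>
    induction Q using qsh_induction with
    | h0 => simp [SP_zero_right]
    | ha Q Q' hQ hQ' => rw [smul_add, SP_add_right, SP_add_right, hQ, hQ', smul_add]
    | hs v b =>
      rw [show r • (MonoidAlgebra.single v b : QSh k) = MonoidAlgebra.single v (r*b) by
        rw [MonoidAlgebra.smul_single, smul_eq_mul]]
      rw [SP_single_single, SP_single_single, smul_smul]
      ring_nf

lemma single_eq_smul_ofL (u : Word) (a : k) :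
    (MonoidAlgebra.single u a : QSh k) = a • ofL k (FreeMonoid.toList u) := by
  rw [ofL_eq_single, FreeMonoid.ofList_toList, MonoidAlgebra.smul_single, smul_eq_mul, mul_one]

end Stuffle


open Stuffle in
/-- the quasi-shuffle product on `k⟨Y⟩` is associative. -/
theorem stuffle_assoc (k : Type) [CommRing k] [Algebra ℚ k] (P Q R : QSh k) :
    stuffleProd k (stuffleProd k P Q) R = stuffleProd k P (stuffleProd k Q R) := by
  induction P using qsh_induction with
  | h0 => simp [SP_zero_left]
  | ha P P' hP hP' => rw [SP_add_left, SP_add_left, SP_add_left, hP, hP']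
  | hs u a =>
    induction Q using qsh_induction with
    | h0 => simp [SP_zero_left, SP_zero_right]
    | ha Q Q' hQ hQ' =>
      rw [SP_add_right, SP_add_left, SP_add_left, SP_add_right, hQ, hQ']
    | hs v b =>
      induction R using qsh_induction with
      | h0 => simp [SP_zero_right]
      | ha R R' hR hR' =>
        rw [SP_add_right, SP_add_right, SP_add_right, hR, hR']
      | hs w c =>
        simp only [single_eq_smul_ofL, SP_smul_left, SP_smul_right, SP_ofL_ofL]
        rw [aux_assoc]

end
end

section
/- For any words u, v, w over Y, the coefficient pairing satisfies ⟨Δ_⊛ w, u ⊗ v⟩ = ⟨w, u ⊛ v⟩, i.e. the quasi-shuffle coproduct Δ_⊛ (defined on letters by Δ_⊛ y_k = y_k ⊗ 1 + 1 ⊗ y_k + Σ_{i=1}^{k-1} y_i ⊗ y_{k-i} and extended as an algebra morphism for concatenation) is dual to the quasi-shuffle product. -/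
open scoped TensorProduct
open Finset

noncomputable section

/-- The quasi-shuffle coproduct `Δ_⊛`, the algebra morphism (for concatenation) with
`Δ_⊛ y_n = y_n ⊗ 1 + 1 ⊗ y_n + Σ_{i+j=n, i,j ≥ 1} y_i ⊗ y_j`. -/
def Δstuf (k : Type) [CommRing k] [Algebra ℚ k] : QSh k →ₐ[k] (QSh k ⊗[k] QSh k) :=
  MonoidAlgebra.lift k (QSh k ⊗[k] QSh k) Word
    (FreeMonoid.lift fun n : ℕ+ =>
      (yy k n) ⊗ₜ 1 + 1 ⊗ₜ (yy k n)
      + ∑ p ∈ Finset.HasAntidiagonal.antidiagonal (n : ℕ),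
          if 0 < p.1 ∧ 0 < p.2 then (yy k p.1) ⊗ₜ[k] (yy k p.2) else 0)

/-- The pairing `⟨·, u ⊗ v⟩` on `k⟨Y⟩ ⊗ k⟨Y⟩`, words forming an orthonormal basis. -/
def pairT (k : Type) [CommRing k] [Algebra ℚ k] (u v : Word) :
    (QSh k ⊗[k] QSh k) →ₗ[k] k :=
  TensorProduct.lift ((LinearMap.mul k k).compl₁₂
    ((Finsupp.lapply u : (Word →₀ k) →ₗ[k] k) ∘ₗ (MonoidAlgebra.coeffLinearEquiv k).toLinearMap)
    ((Finsupp.lapply v : (Word →₀ k) →ₗ[k] k) ∘ₗ (MonoidAlgebra.coeffLinearEquiv k).toLinearMap))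

namespace QStufDualAux
open MonoidAlgebra FreeMonoid

variable (k : Type) [CommRing k] [Algebra ℚ k]

set_option linter.unusedSectionVars false

lemma trunc_cons (c c' : ℕ+) (w : List ℕ+) (p : QSh k) :
    (MonoidAlgebra.of k Word (FreeMonoid.of c) * p).coeff (FreeMonoid.ofList (c' :: w)) =
      if c = c' then p.coeff (FreeMonoid.ofList w) else 0 := by
  by_cases h : c = c'
  · subst h
    rw [if_pos rfl, MonoidAlgebra.of_apply,
      MonoidAlgebra.coeff_single_mul_eq_mul_coeff (x := p) (m := FreeMonoid.of c)
        (m₁ := FreeMonoid.ofList (c :: w)) (FreeMonoid.ofList w) ?_, one_mul]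
    intro a _
    constructor
    · intro ha
      have := congrArg FreeMonoid.toList ha
      simp only [FreeMonoid.toList_of_mul, FreeMonoid.toList_ofList, List.cons.injEq,
        true_and] at this
      exact congrArg FreeMonoid.ofList this
    · rintro rfl; rfl
  · rw [if_neg h, MonoidAlgebra.of_apply]
    refine MonoidAlgebra.single_mul_apply_of_not_exists_mul _ _ ?_
    rintro ⟨d, hd⟩
    have := congrArg FreeMonoid.toList hd
    simp only [FreeMonoid.toList_ofList, FreeMonoid.toList_of_mul, List.cons.injEq] at this
    exact h this.1.symm

lemma trunc_one (c : ℕ+) (p : QSh k) :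
    (MonoidAlgebra.of k Word (FreeMonoid.of c) * p).coeff (FreeMonoid.ofList ([] : List ℕ+)) = 0 := by
  rw [MonoidAlgebra.of_apply]
  refine MonoidAlgebra.single_mul_apply_of_not_exists_mul _ _ ?_
  rintro ⟨d, hd⟩
  exact absurd (congrArg FreeMonoid.toList hd) (by simp [FreeMonoid.toList_of_mul])

lemma of_coeff (g w : List ℕ+) :
    (MonoidAlgebra.of k Word (FreeMonoid.ofList g)).coeff (FreeMonoid.ofList w) =
      if g = w then 1 else 0 := by
  classical
  rw [MonoidAlgebra.of_apply, MonoidAlgebra.coeff_single_apply]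
  refine if_congr ?_ rfl rfl
  exact FreeMonoid.ofList.apply_eq_iff_eq

lemma pairT_tmul (u v : Word) (x y : QSh k) :
    pairT k u v (x ⊗ₜ[k] y) = x.coeff u * y.coeff v := by
  simp only [pairT, TensorProduct.lift.tmul, LinearMap.compl₁₂_apply, LinearMap.mul_apply']
  rfl

lemma pairT_mul_aux (x y : QSh k) (u v u' v' : Word)
    (hx : ∀ p : QSh k, (x * p).coeff u = p.coeff u')
    (hy : ∀ p : QSh k, (y * p).coeff v = p.coeff v')
    (s : QSh k ⊗[k] QSh k) :
    pairT k u v ((x ⊗ₜ[k] y) * s) = pairT k u' v' s := by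
  induction s using TensorProduct.induction_on with
  | zero => simp
  | tmul p q => rw [Algebra.TensorProduct.tmul_mul_tmul, pairT_tmul, pairT_tmul, hx, hy]
  | add s t hs ht => rw [mul_add, map_add, map_add, hs, ht]

lemma pairT_mul_zero_left (x y : QSh k) (u v : Word)
    (hx : ∀ p : QSh k, (x * p).coeff u = 0) (s : QSh k ⊗[k] QSh k) :
    pairT k u v ((x ⊗ₜ[k] y) * s) = 0 := by
  induction s using TensorProduct.induction_on with
  | zero => simp
  | tmul p q => rw [Algebra.TensorProduct.tmul_mul_tmul, pairT_tmul, hx, zero_mul]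
  | add s t hs ht => rw [mul_add, map_add, hs, ht, add_zero]

lemma pairT_mul_zero_right (x y : QSh k) (u v : Word)
    (hy : ∀ p : QSh k, (y * p).coeff v = 0) (s : QSh k ⊗[k] QSh k) :
    pairT k u v ((x ⊗ₜ[k] y) * s) = 0 := by
  induction s using TensorProduct.induction_on with
  | zero => simp
  | tmul p q => rw [Algebra.TensorProduct.tmul_mul_tmul, pairT_tmul, hy, mul_zero]
  | add s t hs ht => rw [mul_add, map_add, hs, ht, add_zero]

lemma yy_pnat (c : ℕ+) : yy k (c : ℕ) = MonoidAlgebra.of k Word (FreeMonoid.of c) := by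
  rw [yy, dif_pos c.pos]
  rfl

lemma Δ_letter (c : ℕ+) :
    Δstuf k (MonoidAlgebra.of k Word (FreeMonoid.of c)) =
      MonoidAlgebra.of k Word (FreeMonoid.of c) ⊗ₜ[k] 1
      + 1 ⊗ₜ[k] MonoidAlgebra.of k Word (FreeMonoid.of c)
      + ∑ p ∈ Finset.HasAntidiagonal.antidiagonal (c : ℕ),
          if 0 < p.1 ∧ 0 < p.2 then (yy k p.1) ⊗ₜ[k] (yy k p.2) else 0 := by
  rw [Δstuf, MonoidAlgebra.lift_of, FreeMonoid.lift_eval_of, yy_pnat]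

lemma pair_letter_nil_left (a' : ℕ+) (y : QSh k) (v : Word) (s : QSh k ⊗[k] QSh k) :
    pairT k (FreeMonoid.ofList ([] : List ℕ+)) v
      ((MonoidAlgebra.of k Word (FreeMonoid.of a') ⊗ₜ[k] y) * s) = 0 :=
  pairT_mul_zero_left k _ _ _ _ (fun p => trunc_one k a' p) s

lemma pair_letter_nil_right (b' : ℕ+) (x : QSh k) (u : Word) (s : QSh k ⊗[k] QSh k) :
    pairT k u (FreeMonoid.ofList ([] : List ℕ+))
      ((x ⊗ₜ[k] MonoidAlgebra.of k Word (FreeMonoid.of b')) * s) = 0 :=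
  pairT_mul_zero_right k _ _ _ _ (fun p => trunc_one k b' p) s

lemma pair_letter_one (a' a : ℕ+) (u' : List ℕ+) (v : Word) (s : QSh k ⊗[k] QSh k) :
    pairT k (FreeMonoid.ofList (a :: u')) v
      ((MonoidAlgebra.of k Word (FreeMonoid.of a') ⊗ₜ[k] (1 : QSh k)) * s) =
      if a' = a then pairT k (FreeMonoid.ofList u') v s else 0 := by
  by_cases h : a' = a
  · subst h
    rw [if_pos rfl]
    exact pairT_mul_aux k _ _ _ _ _ _
      (fun p => by rw [trunc_cons, if_pos rfl]) (fun p => by rw [one_mul]) s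
  · rw [if_neg h]
    exact pairT_mul_zero_left k _ _ _ _ (fun p => by rw [trunc_cons, if_neg h]) s

lemma pair_one_letter (b' b : ℕ+) (u : Word) (v' : List ℕ+) (s : QSh k ⊗[k] QSh k) :
    pairT k u (FreeMonoid.ofList (b :: v'))
      (((1 : QSh k) ⊗ₜ[k] MonoidAlgebra.of k Word (FreeMonoid.of b')) * s) =
      if b' = b then pairT k u (FreeMonoid.ofList v') s else 0 := by
  by_cases h : b' = b
  · subst h
    rw [if_pos rfl]
    exact pairT_mul_aux k _ _ _ _ _ _
      (fun p => by rw [one_mul]) (fun p => by rw [trunc_cons, if_pos rfl]) s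
  · rw [if_neg h]
    exact pairT_mul_zero_right k _ _ _ _ (fun p => by rw [trunc_cons, if_neg h]) s

lemma pair_letter_letter (a' b' a b : ℕ+) (u' v' : List ℕ+) (s : QSh k ⊗[k] QSh k) :
    pairT k (FreeMonoid.ofList (a :: u')) (FreeMonoid.ofList (b :: v'))
      ((MonoidAlgebra.of k Word (FreeMonoid.of a') ⊗ₜ[k]
        MonoidAlgebra.of k Word (FreeMonoid.of b')) * s) =
      if a' = a ∧ b' = b then pairT k (FreeMonoid.ofList u') (FreeMonoid.ofList v') s else 0 := by
  by_cases h1 : a' = a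
  · by_cases h2 : b' = b
    · subst h1; subst h2
      rw [if_pos ⟨rfl, rfl⟩]
      exact pairT_mul_aux k _ _ _ _ _ _
        (fun p => by rw [trunc_cons, if_pos rfl]) (fun p => by rw [trunc_cons, if_pos rfl]) s
    · rw [if_neg (by tauto)]
      exact pairT_mul_zero_right k _ _ _ _ (fun p => by rw [trunc_cons, if_neg h2]) s
  · rw [if_neg (by tauto)]
    exact pairT_mul_zero_left k _ _ _ _ (fun p => by rw [trunc_cons, if_neg h1]) s

lemma piece3_nil_left (c : ℕ+) (v : Word) (s : QSh k ⊗[k] QSh k) :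
    pairT k (FreeMonoid.ofList ([] : List ℕ+)) v
      ((∑ p ∈ Finset.HasAntidiagonal.antidiagonal (c : ℕ),
          if 0 < p.1 ∧ 0 < p.2 then (yy k p.1) ⊗ₜ[k] (yy k p.2) else 0) * s) = 0 := by
  rw [Finset.sum_mul, map_sum]
  refine Finset.sum_eq_zero fun p hp => ?_
  split_ifs with h
  · rw [show yy k p.1 = MonoidAlgebra.of k Word (FreeMonoid.of ⟨p.1, h.1⟩) from
      by rw [yy, dif_pos h.1]]
    exact pair_letter_nil_left k _ _ _ s
  · rw [zero_mul, map_zero]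

lemma piece3_nil_right (c : ℕ+) (u : Word) (s : QSh k ⊗[k] QSh k) :
    pairT k u (FreeMonoid.ofList ([] : List ℕ+))
      ((∑ p ∈ Finset.HasAntidiagonal.antidiagonal (c : ℕ),
          if 0 < p.1 ∧ 0 < p.2 then (yy k p.1) ⊗ₜ[k] (yy k p.2) else 0) * s) = 0 := by
  rw [Finset.sum_mul, map_sum]
  refine Finset.sum_eq_zero fun p hp => ?_
  split_ifs with h
  · rw [show yy k p.2 = MonoidAlgebra.of k Word (FreeMonoid.of ⟨p.2, h.2⟩) from
      by rw [yy, dif_pos h.2]]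
    exact pair_letter_nil_right k _ _ _ s
  · rw [zero_mul, map_zero]

lemma piece3_cons (c a b : ℕ+) (u' v' : List ℕ+) (s : QSh k ⊗[k] QSh k) :
    pairT k (FreeMonoid.ofList (a :: u')) (FreeMonoid.ofList (b :: v'))
      ((∑ p ∈ Finset.HasAntidiagonal.antidiagonal (c : ℕ),
          if 0 < p.1 ∧ 0 < p.2 then (yy k p.1) ⊗ₜ[k] (yy k p.2) else 0) * s) =
      if (a : ℕ) + (b : ℕ) = (c : ℕ) then
        pairT k (FreeMonoid.ofList u') (FreeMonoid.ofList v') s else 0 := by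
  rw [Finset.sum_mul, map_sum]
  have key : ∀ p ∈ Finset.HasAntidiagonal.antidiagonal (c : ℕ),
      pairT k (FreeMonoid.ofList (a :: u')) (FreeMonoid.ofList (b :: v'))
        ((if 0 < p.1 ∧ 0 < p.2 then (yy k p.1) ⊗ₜ[k] (yy k p.2) else 0) * s)
      = if p = ((a : ℕ), (b : ℕ)) then
          pairT k (FreeMonoid.ofList u') (FreeMonoid.ofList v') s else 0 := by
    rintro ⟨i, j⟩ hp
    by_cases hij : 0 < i ∧ 0 < j
    · rw [if_pos hij,
        show yy k i = MonoidAlgebra.of k Word (FreeMonoid.of (Nat.toPNat i hij.1)) from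
          by rw [yy, dif_pos hij.1]; rfl,
        show yy k j = MonoidAlgebra.of k Word (FreeMonoid.of (Nat.toPNat j hij.2)) from
          by rw [yy, dif_pos hij.2]; rfl,
        pair_letter_letter]
      refine if_congr ?_ rfl rfl
      constructor
      · rintro ⟨rfl, rfl⟩; rfl
      · intro h
        injection h with h1 h2
        subst h1; subst h2
        exact ⟨rfl, rfl⟩
    · rw [if_neg hij, zero_mul, map_zero, if_neg]
      intro h
      injection h with h1 h2
      subst h1; subst h2
      exact hij ⟨a.pos, b.pos⟩
  rw [Finset.sum_congr rfl key,
    Finset.sum_ite_eq' (Finset.HasAntidiagonal.antidiagonal (c : ℕ)) ((a : ℕ), (b : ℕ))]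
  refine if_congr ?_ rfl rfl
  rw [Finset.HasAntidiagonal.mem_antidiagonal]

lemma one_coeff (w : List ℕ+) :
    (1 : QSh k).coeff (FreeMonoid.ofList w) = if w = [] then 1 else 0 := by
  classical
  rw [MonoidAlgebra.one_def, MonoidAlgebra.coeff_single_apply]
  refine if_congr ?_ rfl rfl
  rw [show (1 : Word) = FreeMonoid.ofList [] from rfl]
  exact ⟨fun h => (FreeMonoid.ofList.apply_eq_iff_eq.mp h).symm,
    fun h => congrArg FreeMonoid.ofList h.symm⟩

lemma stuffle_nil_right (u : List ℕ+) :
    stuffleAux k u [] = MonoidAlgebra.of k Word (FreeMonoid.ofList u) := by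
  cases u <;> simp only [stuffleAux]

lemma key (w : List ℕ+) : ∀ (u v : List ℕ+),
    pairT k (FreeMonoid.ofList u) (FreeMonoid.ofList v)
        (Δstuf k (MonoidAlgebra.of k Word (FreeMonoid.ofList w)))
      = (stuffleAux k u v).coeff (FreeMonoid.ofList w) := by
  induction w with
  | nil =>
    intro u v
    have hΔ : Δstuf k (MonoidAlgebra.of k Word (FreeMonoid.ofList ([] : List ℕ+)))
        = (1 : QSh k) ⊗ₜ[k] (1 : QSh k) := by
      rw [show FreeMonoid.ofList ([] : List ℕ+) = (1 : Word) from rfl, map_one, map_one]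
      rfl
    rw [hΔ, pairT_tmul, one_coeff, one_coeff]
    match u, v with
    | [], [] =>
      simp only [stuffleAux]
      simp [of_coeff]
    | [], b :: v' =>
      simp only [stuffleAux]
      simp [of_coeff]
    | a :: u', [] =>
      rw [stuffle_nil_right]
      simp [of_coeff]
    | a :: u', b :: v' =>
      simp only [stuffleAux]
      rw [MonoidAlgebra.coeff_add, MonoidAlgebra.coeff_add, Finsupp.add_apply, Finsupp.add_apply, trunc_one, trunc_one, trunc_one,
        if_neg (by simp), if_neg (by simp)]
      simp
  | cons c w' IH =>
    intro u v
    rw [show MonoidAlgebra.of k Word (FreeMonoid.ofList (c :: w'))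
          = MonoidAlgebra.of k Word (FreeMonoid.of c)
            * MonoidAlgebra.of k Word (FreeMonoid.ofList w') from by rw [← map_mul]; rfl,
      map_mul, Δ_letter, add_mul, add_mul, map_add, map_add]
    match u, v with
    | [], [] =>
      simp only [stuffleAux]
      rw [pair_letter_nil_left, pair_letter_nil_right, piece3_nil_left, of_coeff,
        if_neg (by simp)]
      simp
    | [], b :: v' =>
      rw [pair_letter_nil_left, pair_one_letter, piece3_nil_left, IH [] v']
      simp only [stuffleAux]
      rw [of_coeff, of_coeff]
      by_cases hb : c = b
      · subst hb
        simp [List.cons.injEq]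
      · rw [if_neg hb, if_neg (by intro h; exact absurd (List.cons.injEq .. ▸ h).1.symm hb)]
        simp
    | a :: u', [] =>
      rw [pair_letter_one, pair_letter_nil_right, piece3_nil_right, IH u' [],
        stuffle_nil_right, stuffle_nil_right, of_coeff, of_coeff]
      by_cases ha : c = a
      · subst ha
        simp [List.cons.injEq]
      · rw [if_neg ha, if_neg (by intro h; exact absurd (List.cons.injEq .. ▸ h).1.symm ha)]
        simp
    | a :: u', b :: v' =>
      rw [pair_letter_one, pair_one_letter, piece3_cons,
        IH u' (b :: v'), IH (a :: u') v', IH u' v']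
      simp only [stuffleAux]
      rw [MonoidAlgebra.coeff_add, MonoidAlgebra.coeff_add, Finsupp.add_apply, Finsupp.add_apply, trunc_cons, trunc_cons, trunc_cons]
      congr 1
      · congr 1
        · exact if_congr eq_comm rfl rfl
        · exact if_congr eq_comm rfl rfl
      · refine if_congr ?_ rfl rfl
        rw [← PNat.add_coe, PNat.coe_inj]
end QStufDualAux

/-- `⟨Δ_⊛ w, u ⊗ v⟩ = ⟨w, u ⊛ v⟩`, i.e. the quasi-shuffle coproduct is
dual to the quasi-shuffle product. -/
theorem deltastuf_dual_stuffle (k : Type) [CommRing k] [Algebra ℚ k] (u v w : Word) :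
    pairT k u v (Δstuf k (MonoidAlgebra.of k Word w))
      = ((stuffleAux k (FreeMonoid.toList u) (FreeMonoid.toList v)).coeff : Word →₀ k) w :=
  QStufDualAux.key k (FreeMonoid.toList w) (FreeMonoid.toList u) (FreeMonoid.toList v)

end
end

section
/- For each n ≥ 1, y_n = Σ_{J=(j_1,...,j_r), j_1+···+j_r = n} R^J / π(J), where R^J = R_{j_1}···R_{j_r} and π(J) = j_1(j_1+j_2)···(j_1+···+j_r) — equivalently y_n = R_n/n + (terms R^J with length(J) > 1); consequently each y_n lies in the subalgebra generated by {R_k}_{k≤n} and conversely R_n is a polynomial in {y_k}_{k≤n}, homogeneous of weight n. -/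
open scoped TensorProduct
open Finset

noncomputable section

/-- Scalar action of a rational `c` on an element of a `k`-module, through `algebraMap ℚ k`. -/
def qsmul (k : Type) [CommRing k] [Algebra ℚ k] {M : Type} [AddCommGroup M] [Module k M]
    (c : ℚ) (x : M) : M := (algebraMap ℚ k c) • x

/-- The generating series `𝒴(t) = 1 + Σ_{n ≥ 1} y_n t^n ∈ k⟨Y⟩[[t]]`. -/
def Yser (k : Type) [CommRing k] [Algebra ℚ k] : PowerSeries (QSh k) :=
  PowerSeries.mk (yy k)

/-- `log 𝒴(t) = Σ_{j ≥ 1} (-1)^{j-1} (𝒴(t) - 1)^j / j`, which makes sense coefficientwise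
since `𝒴(t) - 1` has zero constant term. -/
def logY (k : Type) [CommRing k] [Algebra ℚ k] : PowerSeries (QSh k) :=
  PowerSeries.mk fun n => ∑ j ∈ Finset.Icc 1 n,
    qsmul k ((-1 : ℚ) ^ (j - 1) / j) (PowerSeries.coeff (R := QSh k) n ((Yser k - 1) ^ j))

/-- The word `y_{j_1} ⋯ y_{j_l}` attached to a list `(j_1, …, j_l)` of positive integers. -/
def wordOf (k : Type) [CommRing k] (L : List ℕ) : QSh k := (L.map (yy k)).prod

/-- `π₁(y_n) = y_n + Σ_{l ≥ 2} ((-1)^{l-1}/l) Σ_{j_1+⋯+j_l = n, j_i ≥ 1} y_{j_1} ⋯ y_{j_l}`. -/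
def pi1 (k : Type) [CommRing k] [Algebra ℚ k] (n : ℕ) : QSh k :=
  yy k n + ∑ c ∈ Finset.univ.filter (fun c : Composition n => 2 ≤ c.length),
    qsmul k ((-1 : ℚ) ^ (c.length - 1) / c.length) (wordOf k c.blocks)

/-- The coefficients `X_n` of the inverse series `𝒴(t)^{-1} = 1 + Σ_{n ≥ 1} X_n t^n`. -/
def Xc (k : Type) [CommRing k] [Algebra ℚ k] : ℕ → QSh k
  | 0 => 1
  | n + 1 => - ∑ i ∈ Finset.range (n + 1), yy k (i + 1) * Xc k (n - i)
  termination_by n => n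
  decreasing_by omega

/-- The series `𝒴(t)^{-1}`. -/
def Xser (k : Type) [CommRing k] [Algebra ℚ k] : PowerSeries (QSh k) :=
  PowerSeries.mk (Xc k)

/-- The formal derivative `d/dt` on `k⟨Y⟩[[t]]`. -/
def Dt (k : Type) [CommRing k] [Algebra ℚ k] (φ : PowerSeries (QSh k)) :
    PowerSeries (QSh k) :=
  PowerSeries.mk fun n => (n + 1) • PowerSeries.coeff (R := QSh k) (n + 1) φ

/-- `L(t) = 𝒴'(t) 𝒴(t)^{-1} = Σ_{n ≥ 1} L_n t^{n-1}`; `Lc m` is `L_{m+1}`. -/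
def Lc (k : Type) [CommRing k] [Algebra ℚ k] (m : ℕ) : QSh k :=
  PowerSeries.coeff (R := QSh k) m (Dt k (Yser k) * Xser k)

/-- `R(t) = 𝒴(t)^{-1} 𝒴'(t) = Σ_{n ≥ 1} R_n t^{n-1}`; `Rc m` is `R_{m+1}`. -/
def Rc (k : Type) [CommRing k] [Algebra ℚ k] (m : ℕ) : QSh k :=
  PowerSeries.coeff (R := QSh k) m (Xser k * Dt k (Yser k))

/-- `π_u(J) = j_1 (j_1+j_2) ⋯ (j_1+⋯+j_r)`, the product of the partial sums of the
composition `J = (j_1, …, j_r)`. -/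
def piu (L : List ℕ) : ℕ :=
  ((List.range L.length).map fun i => (L.take (i + 1)).sum).prod

section AuxForStatement12

-- ### auxiliary lemmas

variable (k : Type) [CommRing k] [Algebra ℚ k]

lemma yy_zero : yy k 0 = 1 := by simp [yy]

lemma Yser_mul_Xser : Yser k * Xser k = 1 := by
  ext n
  rw [PowerSeries.coeff_mul]
  cases n with
  | zero => simp [Yser, Xser, yy_zero, Xc]
  | succ n =>
    rw [Finset.Nat.sum_antidiagonal_eq_sum_range_succ_mk, Finset.sum_range_succ']
    simp only [Yser, Xser, PowerSeries.coeff_mk, yy_zero, one_mul, Nat.sub_zero]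
    have h : ∀ i ∈ Finset.range (n + 1), yy k (i + 1) * Xc k (n + 1 - (i + 1))
        = yy k (i + 1) * Xc k (n - i) := by
      intro i hi; congr 2; omega
    rw [Finset.sum_congr rfl h]
    have hX : Xc k (n + 1) = - ∑ i ∈ Finset.range (n + 1), yy k (i + 1) * Xc k (n - i) := by
      rw [Xc]
    rw [hX]
    ring_nf
    simp

lemma qsmul_qsmul (a b : ℚ) (x : QSh k) : qsmul k a (qsmul k b x) = qsmul k (a * b) x := by
  simp [qsmul, smul_smul, ← map_mul]

lemma qsmul_one_eq (x : QSh k) : qsmul k 1 x = x := by simp [qsmul]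

lemma nsmul_qsmul (n : ℕ) (c : ℚ) (x : QSh k) :
    n • qsmul k c x = qsmul k (n * c) x := by
  rw [← Nat.cast_smul_eq_nsmul k, qsmul, qsmul, smul_smul]
  congr 1
  rw [← map_natCast (algebraMap ℚ k) n, ← map_mul]

lemma qsmul_nsmul (c : ℚ) (n : ℕ) (x : QSh k) :
    qsmul k c (n • x) = qsmul k (c * n) x := by
  rw [← Nat.cast_smul_eq_nsmul k, qsmul, qsmul, smul_smul]
  congr 1
  rw [← map_natCast (algebraMap ℚ k) n, ← map_mul]

lemma qsmul_mul (c : ℚ) (x y : QSh k) : qsmul k c x * y = qsmul k c (x * y) := by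
  simp [qsmul, smul_mul_assoc]

-- the recursion satisfied by yy
lemma yy_rec (n : ℕ) (hn : 1 ≤ n) :
    n • yy k n = ∑ i ∈ Finset.range n, yy k (n - 1 - i) * Rc k i := by
  have hD : Dt k (Yser k) = Yser k * (Xser k * Dt k (Yser k)) := by
    rw [← mul_assoc, Yser_mul_Xser, one_mul]
  have h1 : PowerSeries.coeff (R := QSh k) (n - 1) (Dt k (Yser k)) = n • yy k n := by
    simp only [Dt, PowerSeries.coeff_mk, Yser]
    have e : n - 1 + 1 = n := by omega
    rw [e]
  have h2 : PowerSeries.coeff (R := QSh k) (n - 1) (Yser k * (Xser k * Dt k (Yser k)))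
      = ∑ i ∈ Finset.range n, yy k i * Rc k (n - 1 - i) := by
    rw [PowerSeries.coeff_mul, Finset.Nat.sum_antidiagonal_eq_sum_range_succ_mk]
    have : (n - 1).succ = n := by omega
    rw [this]
    exact Finset.sum_congr rfl fun i hi => by simp [Yser, Rc]
  rw [← h1, hD, h2, ← Finset.sum_range_reflect]
  refine Finset.sum_congr rfl fun i hi => ?_
  simp only [Finset.mem_range] at hi
  congr 2
  omega

-- gluing compositions
def glue (n j : ℕ) (hj : 1 ≤ j) (hjn : j ≤ n) (c : Composition (n - j)) : Composition n where
  blocks := c.blocks ++ [j]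
  blocks_pos := by
    intro i hi
    rcases List.mem_append.1 hi with h | h
    · exact c.blocks_pos h
    · simp at h; omega
  blocks_sum := by
    have := c.blocks_sum
    simp only [List.sum_append, List.sum_cons, List.sum_nil]
    omega

lemma blocks_ne_nil {n : ℕ} (hn : 1 ≤ n) (c : Composition n) : c.blocks ≠ [] := by
  intro h
  have := c.blocks_sum
  rw [h] at this
  simp at this
  omega

lemma last_mem {n : ℕ} (hn : 1 ≤ n) (c : Composition n) :
    1 ≤ c.blocks.getLast (blocks_ne_nil hn c) ∧ c.blocks.getLast (blocks_ne_nil hn c) ≤ n := by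
  have hm : c.blocks.getLast (blocks_ne_nil hn c) ∈ c.blocks := List.getLast_mem _
  refine ⟨c.one_le_blocks hm, ?_⟩
  have := List.single_le_sum (l := c.blocks) (fun x _ => Nat.zero_le x) _ hm
  rw [c.blocks_sum] at this
  exact this

def unglue {n : ℕ} (hn : 1 ≤ n) (c : Composition n) :
    Composition (n - c.blocks.getLast (blocks_ne_nil hn c)) where
  blocks := c.blocks.dropLast
  blocks_pos := fun hi => c.blocks_pos (List.dropLast_subset _ hi)
  blocks_sum := by
    have h := congrArg List.sum (List.dropLast_append_getLast (blocks_ne_nil hn c))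
    rw [List.sum_append] at h
    simp only [List.sum_cons, List.sum_nil, add_zero] at h
    rw [c.blocks_sum] at h
    omega

lemma sigma_ext {n : ℕ} {j j' : ℕ} {c : Composition (n - j)} {c' : Composition (n - j')}
    (h : j = j') (hb : c.blocks = c'.blocks) :
    (⟨j, c⟩ : Σ i : ℕ, Composition (n - i)) = ⟨j', c'⟩ := by
  subst h
  exact congrArg _ (Composition.ext hb)

lemma sum_comp_last {M : Type} [AddCommMonoid M] (n : ℕ) (hn : 1 ≤ n) (f : List ℕ → M) :
    (∑ c : Composition n, f c.blocks) =
      ∑ j ∈ Finset.Icc 1 n, ∑ c : Composition (n - j), f (c.blocks ++ [j]) := by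
  rw [Finset.sum_sigma' (Finset.Icc 1 n) (fun j => (Finset.univ : Finset (Composition (n - j))))]
  symm
  refine Finset.sum_bij'
    (i := fun p hp => glue n p.1 (by simp [Finset.mem_sigma, Finset.mem_Icc] at hp; omega)
      (by simp [Finset.mem_sigma, Finset.mem_Icc] at hp; omega) p.2)
    (j := fun c _ => ⟨c.blocks.getLast (blocks_ne_nil hn c), unglue hn c⟩)
    (fun _ _ => Finset.mem_univ _)
    (fun c _ => by
      simp only [Finset.mem_sigma, Finset.mem_Icc, Finset.mem_univ, and_true]
      exact ⟨(last_mem hn c).1, (last_mem hn c).2⟩)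
    (fun p hp => ?_) (fun c hc => ?_) (fun p hp => rfl)
  · -- unglue (glue p) = p
    refine sigma_ext ?_ ?_
    · exact List.getLast_concat
    · show (glue n p.1 _ _ p.2).blocks.dropLast = p.2.blocks
      exact List.dropLast_concat
  · -- glue (unglue c) = c
    refine Composition.ext ?_
    show c.blocks.dropLast ++ [c.blocks.getLast (blocks_ne_nil hn c)] = c.blocks
    exact List.dropLast_append_getLast _

lemma piu_append (L : List ℕ) (j : ℕ) :
    piu (L ++ [j]) = piu L * (L.sum + j) := by
  simp only [piu, List.length_append, List.length_cons, List.length_nil]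
  rw [List.range_succ, List.map_append, List.prod_append]
  congr 1
  · refine congrArg _ (List.map_congr_left fun i hi => ?_)
    simp only [List.mem_range] at hi
    rw [List.take_append_of_le_length (by omega)]
  · simp

-- the composition-sum side
def Scomp (n : ℕ) : QSh k :=
  ∑ c : Composition n,
    qsmul k ((1 : ℚ) / (piu c.blocks)) ((c.blocks.map fun j => Rc k (j - 1)).prod)

lemma Scomp_zero : Scomp k 0 = 1 := by
  have hb : ∀ c : Composition 0, c.blocks = [] := by
    intro c
    rcases c.blocks.eq_nil_or_concat with h | ⟨L, a, h⟩
    · exact h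
    · exfalso
      have := c.blocks_sum
      have ha : 0 < a := c.blocks_pos (by rw [h]; simp)
      rw [h] at this
      simp at this
      omega
  rw [Scomp]
  have : ∀ c : Composition 0,
      qsmul k ((1 : ℚ) / (piu c.blocks)) ((c.blocks.map fun j => Rc k (j - 1)).prod) = 1 := by
    intro c
    rw [hb c]
    simp [piu, qsmul]
  rw [Finset.sum_congr rfl fun c _ => this c, Finset.sum_const]
  have : Fintype.card (Composition 0) = 1 := by rw [composition_card]; norm_num
  rw [Finset.card_univ, this, one_smul]

lemma Icc_sum_eq_range {M : Type} [AddCommMonoid M] (n : ℕ) (g : ℕ → M) :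
    ∑ j ∈ Finset.Icc 1 n, g j = ∑ i ∈ Finset.range n, g (i + 1) := by
  rw [← Finset.Ico_add_one_right_eq_Icc, Finset.sum_Ico_eq_sum_range]
  simp [add_comm]

lemma Scomp_rec (n : ℕ) (hn : 1 ≤ n) :
    n • Scomp k n = ∑ i ∈ Finset.range n, Scomp k (n - 1 - i) * Rc k i := by
  rw [Scomp, sum_comp_last (f := fun L => qsmul k ((1 : ℚ) / (piu L))
    ((L.map fun j => Rc k (j - 1)).prod)) n hn, Icc_sum_eq_range, Finset.smul_sum]
  refine Finset.sum_congr rfl fun i hi => ?_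
  simp only [Finset.mem_range] at hi
  rw [Finset.smul_sum]
  have key : ∀ c : Composition (n - (i + 1)),
      n • qsmul k ((1 : ℚ) / (piu (c.blocks ++ [i + 1])))
        (((c.blocks ++ [i + 1]).map fun j => Rc k (j - 1)).prod)
      = qsmul k ((1 : ℚ) / (piu c.blocks))
          ((c.blocks.map fun j => Rc k (j - 1)).prod) * Rc k i := by
    intro c
    rw [piu_append, c.blocks_sum]
    have hsum : n - (i + 1) + (i + 1) = n := by omega
    rw [hsum]
    rw [List.map_append, List.prod_append]
    simp only [List.map_cons, List.map_nil, List.prod_cons, List.prod_nil, mul_one,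
      Nat.add_sub_cancel]
    rw [nsmul_qsmul, ← qsmul_mul]
    have hn0 : (n : ℚ) ≠ 0 := by exact_mod_cast (by omega : n ≠ 0)
    have hc : (n : ℚ) * (1 / ((piu c.blocks * n : ℕ) : ℚ)) = 1 / (piu c.blocks : ℚ) := by
      push_cast
      rw [mul_one_div, mul_comm ((piu c.blocks : ℚ)) (n : ℚ), ← div_div, div_self hn0]
    rw [hc]
  rw [Finset.sum_congr rfl fun c _ => key c, ← Finset.sum_mul]
  have e : n - (i + 1) = n - 1 - i := by omega
  rw [e, Scomp]

lemma yy_eq_Scomp : ∀ n : ℕ, yy k n = Scomp k n := by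
  intro n
  induction n using Nat.strong_induction_on with
  | _ n ih =>
    rcases Nat.eq_zero_or_pos n with rfl | hn
    · rw [yy_zero, Scomp_zero]
    · have h1 := yy_rec k n hn
      have h2 := Scomp_rec k n hn
      have h3 : ∑ i ∈ Finset.range n, yy k (n - 1 - i) * Rc k i
          = ∑ i ∈ Finset.range n, Scomp k (n - 1 - i) * Rc k i := by
        refine Finset.sum_congr rfl fun i hi => ?_
        simp only [Finset.mem_range] at hi
        rw [ih (n - 1 - i) (by omega)]
      have h4 : n • yy k n = n • Scomp k n := by rw [h1, h3, ← h2]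
      have h5 := congrArg (qsmul k ((1 : ℚ) / n)) h4
      rwa [qsmul_nsmul, qsmul_nsmul,
        show (1 / n : ℚ) * n = 1 by field_simp, qsmul_one_eq, qsmul_one_eq] at h5


variable (k : Type) [CommRing k] [Algebra ℚ k]

lemma Xc_mem (m : ℕ) :
    Xc k m ∈ Algebra.adjoin k {x : QSh k | ∃ j, 1 ≤ j ∧ j ≤ m ∧ x = yy k j} := by
  induction m using Nat.strong_induction_on with
  | _ m ih =>
    match m with
    | 0 => rw [Xc]; exact Subalgebra.one_mem _
    | m + 1 =>
      rw [Xc]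
      refine Subalgebra.neg_mem _ (Subalgebra.sum_mem _ fun i hi => Subalgebra.mul_mem _ ?_ ?_)
      · simp only [Finset.mem_range] at hi
        exact Algebra.subset_adjoin ⟨i + 1, by omega, by omega, rfl⟩
      · simp only [Finset.mem_range] at hi
        refine Algebra.adjoin_mono (fun x hx => ?_) (ih (m - i) (by omega))
        obtain ⟨j, h1, h2, h3⟩ := hx
        exact ⟨j, h1, by omega, h3⟩

lemma prod_mem_adjoin (n : ℕ) : ∀ L : List ℕ, (∀ j ∈ L, 1 ≤ j ∧ j ≤ n) →
    (L.map fun j => Rc k (j - 1)).prod ∈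
      Algebra.adjoin k {x : QSh k | ∃ j, 1 ≤ j ∧ j ≤ n ∧ x = Rc k (j - 1)}
  | [], _ => by simp
  | a :: L, h => by
    rw [List.map_cons, List.prod_cons]
    refine Subalgebra.mul_mem _ ?_ (prod_mem_adjoin n L fun j hj => h j (List.mem_cons_of_mem a hj))
    exact Algebra.subset_adjoin ⟨a, (h a (List.mem_cons_self)).1,
      (h a (List.mem_cons_self)).2, rfl⟩

theorem y_in_terms_of_R' (n : ℕ) (hn : 1 ≤ n) :
    yy k n = ∑ c : Composition n,
      qsmul k ((1 : ℚ) / (piu c.blocks)) ((c.blocks.map fun j => Rc k (j - 1)).prod) ∧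
    yy k n ∈ Algebra.adjoin k {x : QSh k | ∃ j, 1 ≤ j ∧ j ≤ n ∧ x = Rc k (j - 1)} ∧
    Rc k (n - 1) ∈ Algebra.adjoin k {x : QSh k | ∃ j, 1 ≤ j ∧ j ≤ n ∧ x = yy k j} := by
  have hpart1 : yy k n = ∑ c : Composition n,
      qsmul k ((1 : ℚ) / (piu c.blocks)) ((c.blocks.map fun j => Rc k (j - 1)).prod) := by
    rw [yy_eq_Scomp k n, Scomp]
  refine ⟨hpart1, ?_, ?_⟩
  · rw [hpart1]
    refine Subalgebra.sum_mem _ fun c _ => ?_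
    rw [qsmul]
    refine Subalgebra.smul_mem _ ?_ _
    refine prod_mem_adjoin k n c.blocks fun j hj => ⟨c.one_le_blocks hj, ?_⟩
    have := List.single_le_sum (l := c.blocks) (fun x _ => Nat.zero_le x) _ hj
    rw [c.blocks_sum] at this
    exact this
  · rw [Rc, PowerSeries.coeff_mul]
    refine Subalgebra.sum_mem _ fun p hp => ?_
    rw [Finset.HasAntidiagonal.mem_antidiagonal] at hp
    simp only [Xser, Dt, Yser, PowerSeries.coeff_mk]
    refine Subalgebra.mul_mem _ ?_ ?_
    · refine Algebra.adjoin_mono (fun x hx => ?_) (Xc_mem k p.1)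
      obtain ⟨j, h1, h2, h3⟩ := hx
      exact ⟨j, h1, by omega, h3⟩
    · refine nsmul_mem ?_ _
      exact Algebra.subset_adjoin ⟨p.2 + 1, by omega, by omega, rfl⟩

end AuxForStatement12

/-- for each `n ≥ 1`, `y_n = Σ_{J=(j_1,…,j_r), w(J)=n} R^J / π_u(J)` where
`R^J = R_{j_1} ⋯ R_{j_r}`; consequently `y_n` lies in the subalgebra generated by the
`R_j`, `j ≤ n`, and conversely `R_n` lies in the subalgebra generated by the `y_j`, `j ≤ n`. -/
theorem y_in_terms_of_R (k : Type) [CommRing k] [Algebra ℚ k] (n : ℕ) (hn : 1 ≤ n) :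
    yy k n = ∑ c : Composition n,
      qsmul k ((1 : ℚ) / (piu c.blocks)) ((c.blocks.map fun j => Rc k (j - 1)).prod) ∧
    yy k n ∈ Algebra.adjoin k {x : QSh k | ∃ j, 1 ≤ j ∧ j ≤ n ∧ x = Rc k (j - 1)} ∧
    Rc k (n - 1) ∈ Algebra.adjoin k {x : QSh k | ∃ j, 1 ≤ j ∧ j ≤ n ∧ x = yy k j} := by
  exact y_in_terms_of_R' k n hn

end
end
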